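/- Let n ≥ 1. The Zariski topology of algebraic sets on ℝ^n has Krull dimension n, i.e., the supremum of lengths of finite chains of nonempty irreducible closed sets strictly ordered by inclusion, minus one, equals n. -/

import Mathlib

open MvPolynomial

/-- An algebraic subset of `ℝ^n`: the common zero set of a set of real polynomials. -/
def IsAlgebraicSet (n : ℕ) (A : Set (Fin n → ℝ)) : Prop :=
  ∃ S : Set (MvPolynomial (Fin n) ℝ), A = {x | ∀ p ∈ S, MvPolynomial.eval x p = 0}

/-- Irreducibility with respect to the topology of algebraic sets: nonempty, and not a
union of two algebraic proper subsets. -/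
def IsAlgIrreducible (n : ℕ) (A : Set (Fin n → ℝ)) : Prop :=
  A.Nonempty ∧ ∀ B C : Set (Fin n → ℝ), IsAlgebraicSet n B → IsAlgebraicSet n C →
    B ⊂ A → C ⊂ A → A ≠ B ∪ C

noncomputable section Stmt3Aux

namespace Stmt3Aux


/-- The vanishing ideal of a subset of `ℝ^n`. -/
def vI (n : ℕ) (A : Set (Fin n → ℝ)) : Ideal (MvPolynomial (Fin n) ℝ) where
  carrier := {p | ∀ x ∈ A, MvPolynomial.eval x p = 0}
  add_mem' := fun h1 h2 x hx => by simp [h1 x hx, h2 x hx]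
  zero_mem' := fun x hx => by simp
  smul_mem' := fun c p h x hx => by simp [smul_eq_mul, h x hx]

lemma mem_vI {n : ℕ} {p : MvPolynomial (Fin n) ℝ} {A : Set (Fin n → ℝ)} :
    p ∈ vI n A ↔ ∀ x ∈ A, MvPolynomial.eval x p = 0 := Iff.rfl

lemma zeroSet_vI {n : ℕ} {A : Set (Fin n → ℝ)} (hA : IsAlgebraicSet n A) :
    {x | ∀ p ∈ vI n A, MvPolynomial.eval x p = 0} = A := by
  obtain ⟨S, rfl⟩ := hA
  ext x
  constructor
  · intro hx p hp
    exact hx p (fun y hy => hy p hp)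
  · intro hx p hp
    exact hp x hx

lemma vI_strict {n : ℕ} {A A' : Set (Fin n → ℝ)} (hA : IsAlgebraicSet n A)
    (h : A ⊂ A') : vI n A' < vI n A := by
  refine lt_of_le_of_ne (fun p hp x hx => hp x (h.subset hx)) ?_
  intro hEq
  obtain ⟨a, ha', ha⟩ := Set.exists_of_ssubset h
  apply ha
  rw [← zeroSet_vI hA]
  intro p hp
  rw [← hEq] at hp
  exact hp a ha'

lemma vI_prime {n : ℕ} {A : Set (Fin n → ℝ)} (hA : IsAlgebraicSet n A)
    (hirr : IsAlgIrreducible n A) : (vI n A).IsPrime := by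
  obtain ⟨⟨a0, ha0⟩, hND⟩ := hirr
  constructor
  · intro htop
    have h1 : (1 : MvPolynomial (Fin n) ℝ) ∈ vI n A := htop ▸ Submodule.mem_top
    simpa using h1 a0 ha0
  · intro p q hpq
    by_contra hcon
    push_neg at hcon
    obtain ⟨hp, hq⟩ := hcon
    obtain ⟨S, hS⟩ := hA
    simp only [mem_vI, not_forall] at hp hq
    obtain ⟨b, hbA, hbp⟩ := hp
    obtain ⟨c, hcA, hcq⟩ := hq
    set B := {x : Fin n → ℝ | ∀ r ∈ S ∪ {p}, MvPolynomial.eval x r = 0} with hB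
    set C := {x : Fin n → ℝ | ∀ r ∈ S ∪ {q}, MvPolynomial.eval x r = 0} with hC
    have hBsub : B ⊂ A := by
      constructor
      · intro x hx
        rw [hS]
        exact fun r hr => hx r (Or.inl hr)
      · intro hsub
        refine hbp (hsub hbA p (Or.inr rfl))
    have hCsub : C ⊂ A := by
      constructor
      · intro x hx
        rw [hS]
        exact fun r hr => hx r (Or.inl hr)
      · intro hsub
        refine hcq (hsub hcA q (Or.inr rfl))
    refine hND B C ⟨_, rfl⟩ ⟨_, rfl⟩ hBsub hCsub ?_
    ext x
    constructor
    · intro hx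
      have h0 : MvPolynomial.eval x p * MvPolynomial.eval x q = 0 := by
        have := hpq x hx
        rwa [map_mul] at this
      rcases mul_eq_zero.mp h0 with h | h
      · left
        intro r hr
        rcases hr with hr | hr
        · exact (hS ▸ hx) r hr
        · simpa [Set.mem_singleton_iff.mp hr]
      · right
        intro r hr
        rcases hr with hr | hr
        · exact (hS ▸ hx) r hr
        · simpa [Set.mem_singleton_iff.mp hr]
    · rintro (hx | hx)
      · exact hBsub.subset hx
      · exact hCsub.subset hx



lemma finrank_restrictDegree_le (n N : ℕ) :
    Module.finrank ℝ (restrictDegree (Fin n) ℝ N) ≤ (N + 1) ^ n := by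
  classical
  set T : Set (Fin n →₀ ℕ) := {s | ∀ i, s i ≤ N} with hT
  set ψ : T → (Fin n → Fin (N + 1)) :=
    fun s => fun i => ⟨s.1 i, Nat.lt_succ_of_le (s.2 i)⟩ with hψ
  have hinj : Function.Injective ψ := by
    intro s t h
    apply Subtype.ext
    apply Finsupp.ext
    intro i
    have := congrFun h i
    simpa [ψ, Fin.ext_iff] using this
  have hfin : Finite T := Finite.of_injective ψ hinj
  have : Fintype T := Fintype.ofFinite T
  have hb : Module.finrank ℝ (restrictDegree (Fin n) ℝ N) = Fintype.card T :=
    Module.finrank_eq_card_basis (basisRestrictSupport ℝ T)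
  rw [hb]
  calc Fintype.card T ≤ Fintype.card (Fin n → Fin (N + 1)) := Fintype.card_le_of_injective ψ hinj
    _ = (N + 1) ^ n := by simp [Fintype.card_fun]

lemma not_algIndep {n : ℕ} (f : Fin (n + 1) → MvPolynomial (Fin n) ℝ) :
    ¬ AlgebraicIndependent ℝ f := by
  classical
  intro h
  set D := (Finset.univ.sup fun i => (f i).totalDegree) + 1 with hD
  set Kk := (n + 1) * D with hK
  have hK1 : 1 ≤ Kk := Nat.mul_pos (Nat.succ_pos n) (Nat.succ_pos _)
  set d := Kk ^ n with hd
  set N := Kk * d with hN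
  set e : (Fin (n + 1) → Fin (d + 1)) → (Fin (n + 1) →₀ ℕ) :=
    fun α => Finsupp.equivFunOnFinite.symm (fun i => (α i : ℕ)) with he
  have he_inj : Function.Injective e := by
    intro a b hab
    funext i
    have : ((a i : ℕ)) = (b i : ℕ) := by
      have := DFunLike.congr_fun hab i
      simpa [e] using this
    exact Fin.ext this
  have hmono : LinearIndependent ℝ fun α : Fin (n + 1) → Fin (d + 1) =>
      (MvPolynomial.monomial (e α) (1 : ℝ)) := by
    have := (basisMonomials (Fin (n + 1)) ℝ).linearIndependent.comp e he_inj
    simpa [coe_basisMonomials, Function.comp_def] using this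
  have hli : LinearIndependent ℝ fun α : Fin (n + 1) → Fin (d + 1) =>
      (aeval f) (MvPolynomial.monomial (e α) (1 : ℝ)) := by
    have := hmono.map' (aeval f).toLinearMap (LinearMap.ker_eq_bot.mpr h)
    simpa [Function.comp_def] using this
  have hprod : ∀ α : Fin (n + 1) → Fin (d + 1),
      (aeval f) (MvPolynomial.monomial (e α) (1 : ℝ)) = ∏ i, f i ^ (α i : ℕ) := by
    intro α
    rw [aeval_monomial, map_one, one_mul]
    rw [Finsupp.prod_fintype]
    · exact Finset.prod_congr rfl fun i _ => by simp [e]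
    · intro i; exact pow_zero _
  have hmem : ∀ α : Fin (n + 1) → Fin (d + 1),
      (aeval f) (MvPolynomial.monomial (e α) (1 : ℝ)) ∈ restrictDegree (Fin n) ℝ N := by
    intro α
    apply restrictTotalDegree_le_restrictDegree
    rw [mem_restrictTotalDegree, hprod α]
    calc (∏ i, f i ^ (α i : ℕ)).totalDegree
        ≤ ∑ i, (f i ^ (α i : ℕ)).totalDegree := totalDegree_finset_prod _ _
      _ ≤ ∑ _i : Fin (n + 1), d * D := by
          apply Finset.sum_le_sum
          intro i _
          calc (f i ^ (α i : ℕ)).totalDegree ≤ (α i : ℕ) * (f i).totalDegree :=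
                totalDegree_pow _ _
            _ ≤ d * D := by
                apply Nat.mul_le_mul
                · exact Fin.is_le _
                · rw [hD]
                  exact le_trans (Finset.le_sup (f := fun i => (f i).totalDegree) (Finset.mem_univ i)) (Nat.le_succ _)
      _ = (n + 1) * (d * D) := by simp [Finset.sum_const, mul_comm]
      _ = N := by rw [hN, hK]; ring
  set g' : (Fin (n + 1) → Fin (d + 1)) → restrictDegree (Fin n) ℝ N :=
    fun α => ⟨_, hmem α⟩ with hg'
  have hli' : LinearIndependent ℝ g' :=
    LinearIndependent.of_comp (restrictDegree (Fin n) ℝ N).subtype hli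
  have hcard := hli'.fintype_card_le_finrank
  rw [Fintype.card_fun] at hcard
  simp only [Fintype.card_fin] at hcard
  have hfr := finrank_restrictDegree_le n N
  have h1 : (d + 1) ^ (n + 1) ≤ (N + 1) ^ n := le_trans hcard hfr
  have h2 : N + 1 ≤ Kk * (d + 1) := by
    calc N + 1 = Kk * d + 1 := rfl
      _ ≤ Kk * d + Kk := by omega
      _ = Kk * (d + 1) := by ring
  have h3 : (N + 1) ^ n ≤ (Kk * (d + 1)) ^ n := Nat.pow_le_pow_left h2 n
  have h4 : (Kk * (d + 1)) ^ n = d * (d + 1) ^ n := by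
    rw [mul_pow, ← hd]
  have h5 : (d + 1) ^ (n + 1) = d * (d + 1) ^ n + (d + 1) ^ n := by ring
  have h6 : 0 < (d + 1) ^ n := by positivity
  linarith


lemma aeval_finSuccEquiv_eq {m : ℕ} {A : Type*} [CommRing A] [Algebra ℝ A]
    (x : Fin (m + 1) → A) (Φ : MvPolynomial (Fin (m + 1)) ℝ) :
    aeval x Φ = Polynomial.eval₂
      (((aeval (fun i => x i.succ) : MvPolynomial (Fin m) ℝ →ₐ[ℝ] A)) : MvPolynomial (Fin m) ℝ →+* A)
      (x 0) (finSuccEquiv ℝ m Φ) := by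
  induction Φ using MvPolynomial.induction_on with
  | C r =>
      rw [aeval_C]
      have : finSuccEquiv ℝ m (C r) = Polynomial.C (C r) := by
        simp [finSuccEquiv_apply]
      rw [this, Polynomial.eval₂_C]
      simp
  | add p q hp hq =>
      simp only [map_add, Polynomial.eval₂_add, hp, hq]
  | mul_X p i hp =>
      rw [map_mul, map_mul, Polynomial.eval₂_mul, hp, aeval_X]
      congr 1
      refine Fin.cases ?_ ?_ i
      · rw [finSuccEquiv_X_zero, Polynomial.eval₂_X]
      · intro j
        rw [finSuccEquiv_X_succ, Polynomial.eval₂_C]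
        simp

private lemma eval₂_zero_of_poly {B A : Type*} [CommRing B] [CommRing A] [IsDomain A]
    (φ : B →+* A) (gP : A) (hgne : gP ≠ 0)
    (hcoeff : ∀ Ψ : Polynomial B, Polynomial.eval₂ φ gP Ψ = 0 → Ψ.coeff 0 = 0) :
    ∀ (N : ℕ) (Ψ : Polynomial B), Ψ.natDegree ≤ N →
      Polynomial.eval₂ φ gP Ψ = 0 → Ψ = 0 := by
  intro N
  induction N with
  | zero =>
      intro Ψ hdeg h0
      rw [Polynomial.eq_C_of_natDegree_le_zero hdeg, hcoeff Ψ h0, map_zero]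
  | succ N ih =>
      intro Ψ hdeg h0
      have hXd : Polynomial.X * Ψ.divX = Ψ := by
        have h2 := Polynomial.X_mul_divX_add Ψ
        rwa [hcoeff Ψ h0, map_zero, add_zero] at h2
      rw [← hXd, Polynomial.eval₂_mul, Polynomial.eval₂_X] at h0
      have hdiv0 : Polynomial.eval₂ φ gP Ψ.divX = 0 := by
        rcases mul_eq_zero.mp h0 with hcase | hcase
        · exact absurd hcase hgne
        · exact hcase
      have hdeg' : Ψ.divX.natDegree ≤ N := by
        rw [Polynomial.natDegree_divX_eq_natDegree_tsub_one]
        omega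
      rw [← hXd, ih _ hdeg' hdiv0, mul_zero]

lemma step_lemma {n m : ℕ} {P Q : Ideal (MvPolynomial (Fin n) ℝ)} (hP : P.IsPrime)
    (hlt : P < Q) (f : Fin m → MvPolynomial (Fin n) ℝ)
    (hf : AlgebraicIndependent ℝ (fun i => Ideal.Quotient.mk Q (f i))) :
    ∃ F : Fin (m + 1) → MvPolynomial (Fin n) ℝ,
      AlgebraicIndependent ℝ (fun i => Ideal.Quotient.mk P (F i)) := by
  haveI := hP
  obtain ⟨g, hgQ, hgP⟩ := SetLike.exists_of_lt hlt
  refine ⟨Fin.cons g f, ?_⟩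
  rw [algebraicIndependent_iff]
  intro Φ hΦ
  have hkey : (Ideal.Quotient.factor hlt.le).comp
      ((aeval fun i => Ideal.Quotient.mk P (f i) :
        MvPolynomial (Fin m) ℝ →ₐ[ℝ] MvPolynomial (Fin n) ℝ ⧸ P) :
          MvPolynomial (Fin m) ℝ →+* MvPolynomial (Fin n) ℝ ⧸ P)
      = ((aeval fun i => Ideal.Quotient.mk Q (f i) :
          MvPolynomial (Fin m) ℝ →ₐ[ℝ] MvPolynomial (Fin n) ℝ ⧸ Q) :
            MvPolynomial (Fin m) ℝ →+* MvPolynomial (Fin n) ℝ ⧸ Q) := by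
    apply MvPolynomial.ringHom_ext
    · intro r
      simp only [RingHom.comp_apply, RingHom.coe_coe, aeval_C]
      rw [IsScalarTower.algebraMap_apply ℝ (MvPolynomial (Fin n) ℝ) (MvPolynomial (Fin n) ℝ ⧸ P),
        Ideal.Quotient.algebraMap_eq, Ideal.Quotient.factor_mk,
        IsScalarTower.algebraMap_apply ℝ (MvPolynomial (Fin n) ℝ) (MvPolynomial (Fin n) ℝ ⧸ Q),
        Ideal.Quotient.algebraMap_eq]
    · intro i
      simp only [RingHom.comp_apply, RingHom.coe_coe, aeval_X]
      rw [Ideal.Quotient.factor_mk]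
  have hcoeff : ∀ Ψ : Polynomial (MvPolynomial (Fin m) ℝ),
      Polynomial.eval₂
        ((aeval fun i => Ideal.Quotient.mk P (f i) :
          MvPolynomial (Fin m) ℝ →ₐ[ℝ] MvPolynomial (Fin n) ℝ ⧸ P) :
            MvPolynomial (Fin m) ℝ →+* MvPolynomial (Fin n) ℝ ⧸ P)
        (Ideal.Quotient.mk P g) Ψ = 0 → Ψ.coeff 0 = 0 := by
    intro Ψ h0
    have h1 := congrArg (Ideal.Quotient.factor hlt.le) h0
    rw [Polynomial.hom_eval₂, map_zero, Ideal.Quotient.factor_mk,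
      Ideal.Quotient.eq_zero_iff_mem.mpr hgQ, Polynomial.eval₂_at_zero, hkey] at h1
    exact algebraicIndependent_iff.mp hf _ h1
  have hgne : (Ideal.Quotient.mk P g) ≠ 0 :=
    fun hcon => hgP (Ideal.Quotient.eq_zero_iff_mem.mp hcon)
  have hΦ' : Polynomial.eval₂
      ((aeval fun i => Ideal.Quotient.mk P (f i) :
        MvPolynomial (Fin m) ℝ →ₐ[ℝ] MvPolynomial (Fin n) ℝ ⧸ P) :
          MvPolynomial (Fin m) ℝ →+* MvPolynomial (Fin n) ℝ ⧸ P)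
      (Ideal.Quotient.mk P g) (finSuccEquiv ℝ m Φ) = 0 := by
    have h2 := aeval_finSuccEquiv_eq (fun i => Ideal.Quotient.mk P ((Fin.cons g f : Fin (m+1) → MvPolynomial (Fin n) ℝ) i)) Φ
    simp only [Fin.cons_succ, Fin.cons_zero] at h2
    rw [hΦ] at h2
    exact h2.symm
  have hfse : finSuccEquiv ℝ m Φ = 0 :=
    eval₂_zero_of_poly _ _ hgne hcoeff _ _ le_rfl hΦ'
  have h3 := congrArg (finSuccEquiv ℝ m).symm hfse
  rwa [AlgEquiv.symm_apply_apply, map_zero] at h3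



/-- coordinate subspace -/
def Vset (n i : ℕ) : Set (Fin n → ℝ) := {x | ∀ j : Fin n, i ≤ (j : ℕ) → x j = 0}

lemma Vset_alg (n i : ℕ) : IsAlgebraicSet n (Vset n i) := by
  refine ⟨(fun j : Fin n => (X j : MvPolynomial (Fin n) ℝ)) '' {j | i ≤ (j : ℕ)}, ?_⟩
  ext x
  constructor
  · intro hx
    rintro p ⟨j, hj, rfl⟩
    rw [eval_X]
    exact hx j hj
  · intro hx j hj
    have := hx (X j) ⟨j, hj, rfl⟩
    rwa [eval_X] at this

lemma eval_projHom {n : ℕ} (i : ℕ) (x : Fin n → ℝ) (p : MvPolynomial (Fin n) ℝ) :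
    eval x (aeval (fun j : Fin n => if (j : ℕ) < i then (X j : MvPolynomial (Fin n) ℝ) else 0) p)
      = eval (fun j : Fin n => if (j : ℕ) < i then x j else 0) p := by
  induction p using MvPolynomial.induction_on with
  | C r => simp
  | add p q hp hq =>
      rw [map_add, map_add, map_add, hp, hq]
  | mul_X p j hp =>
      rw [map_mul, map_mul, map_mul, hp, aeval_X, eval_X]
      congr 1
      split_ifs with hj
      · exact eval_X _
      · exact map_zero _

lemma proj_mem_Vset {n : ℕ} (i : ℕ) (x : Fin n → ℝ) :
    (fun j : Fin n => if (j : ℕ) < i then x j else 0) ∈ Vset n i := by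
  intro j hj
  exact if_neg (not_lt.mpr hj)

lemma proj_eq_self {n : ℕ} {i : ℕ} {x : Fin n → ℝ} (hx : x ∈ Vset n i) :
    (fun j : Fin n => if (j : ℕ) < i then x j else 0) = x := by
  funext j
  by_cases hj : (j : ℕ) < i
  · rw [if_pos hj]
  · rw [if_neg hj, (hx j (not_lt.mp hj))]

lemma Vset_irr (n i : ℕ) : IsAlgIrreducible n (Vset n i) := by
  constructor
  · exact ⟨0, fun j _ => rfl⟩
  · rintro B C ⟨SB, rfl⟩ ⟨SC, rfl⟩ hB hC hEq
    obtain ⟨b, hbV, hbB⟩ := Set.exists_of_ssubset hB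
    obtain ⟨c, hcV, hcC⟩ := Set.exists_of_ssubset hC
    simp only [Set.mem_setOf_eq, not_forall] at hbB hcC
    obtain ⟨p, hpS, hpb⟩ := hbB
    obtain ⟨q, hqS, hqc⟩ := hcC
    have hzero :
        aeval (fun j : Fin n => if (j : ℕ) < i then (X j : MvPolynomial (Fin n) ℝ) else 0) p *
        aeval (fun j : Fin n => if (j : ℕ) < i then (X j : MvPolynomial (Fin n) ℝ) else 0) q
          = 0 := by
      apply MvPolynomial.funext
      intro x
      rw [map_zero, map_mul, eval_projHom, eval_projHom]
      have hmem : (fun j : Fin n => if (j : ℕ) < i then x j else 0) ∈ Vset n i :=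
        proj_mem_Vset i x
      rw [hEq] at hmem
      rcases hmem with hm | hm
      · rw [hm p hpS, zero_mul]
      · rw [hm q hqS, mul_zero]
    rcases mul_eq_zero.mp hzero with h0 | h0
    · apply hpb
      have := congrArg (eval b) h0
      rwa [eval_projHom, map_zero, proj_eq_self hbV] at this
    · apply hqc
      have := congrArg (eval c) h0
      rwa [eval_projHom, map_zero, proj_eq_self hcV] at this

lemma Vset_strict {n : ℕ} {i j : ℕ} (hij : i < j) (hjn : j ≤ n) : Vset n i ⊂ Vset n j := by
  constructor
  · intro x hx l hl
    exact hx l (by omega)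
  · intro hsub
    have hin : i < n := by omega
    have hmem : (fun l : Fin n => if (l : ℕ) = i then (1 : ℝ) else 0) ∈ Vset n j := by
      intro l hl
      exact if_neg (by omega)
    have h2 := hsub hmem ⟨i, hin⟩ (by simp)
    simp at h2


lemma no_chain {n : ℕ} (C : Fin (n + 2) → Set (Fin n → ℝ)) (hmono : StrictMono C)
    (h : ∀ i, IsAlgebraicSet n (C i) ∧ IsAlgIrreducible n (C i)) : False := by
  have hprime : ∀ i, (vI n (C i)).IsPrime := fun i => vI_prime (h i).1 (h i).2
  have hdec : ∀ i j : Fin (n + 2), i < j → vI n (C j) < vI n (C i) := fun i j hij =>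
    vI_strict (h i).1 (hmono hij)
  have key : ∀ j : ℕ, ∀ hj : j ≤ n + 1, ∃ f : Fin j → MvPolynomial (Fin n) ℝ,
      AlgebraicIndependent ℝ
        (fun t => Ideal.Quotient.mk (vI n (C ⟨j, by omega⟩)) (f t)) := by
    intro j
    induction j with
    | zero =>
        intro _
        refine ⟨fun t => 0, ?_⟩
        rw [algebraicIndependent_empty_type_iff]
        haveI : Nontrivial (MvPolynomial (Fin n) ℝ ⧸ vI n (C ⟨0, by omega⟩)) :=
          Ideal.Quotient.nontrivial_iff.mpr (hprime ⟨0, by omega⟩).ne_top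
        exact (algebraMap ℝ _).injective
    | succ j ih =>
        intro hj
        obtain ⟨f, hf⟩ := ih (by omega)
        obtain ⟨F, hF⟩ := step_lemma (hprime ⟨j + 1, by omega⟩)
          (hdec ⟨j, by omega⟩ ⟨j + 1, by omega⟩ (by simp [Fin.lt_def])) f hf
        exact ⟨F, hF⟩
  obtain ⟨f, hf⟩ := key (n + 1) le_rfl
  have hind : AlgebraicIndependent ℝ f := by
    refine AlgebraicIndependent.of_comp
      (Ideal.Quotient.mkₐ ℝ (vI n (C ⟨n + 1, by omega⟩))) ?_
    have : (⇑(Ideal.Quotient.mkₐ ℝ (vI n (C ⟨n + 1, by omega⟩))) ∘ f)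
        = fun t => Ideal.Quotient.mk (vI n (C ⟨n + 1, by omega⟩)) (f t) := by
      funext t
      simp [Ideal.Quotient.mkₐ_eq_mk]
    rw [this]
    exact hf
  exact not_algIndep f hind

end Stmt3Aux

end Stmt3Aux

/-- The Zariski topology of algebraic sets on `ℝ^n` has Krull dimension `n`: there is a
strictly increasing chain of `n+1` nonempty irreducible algebraic sets, but none of
`n+2` such sets. -/
theorem stmt_3 (n : ℕ) (hn : 1 ≤ n) :
    (∃ C : Fin (n + 1) → Set (Fin n → ℝ), StrictMono C ∧
      ∀ i, IsAlgebraicSet n (C i) ∧ IsAlgIrreducible n (C i)) ∧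
    ¬ (∃ C : Fin (n + 2) → Set (Fin n → ℝ), StrictMono C ∧
      ∀ i, IsAlgebraicSet n (C i) ∧ IsAlgIrreducible n (C i)) := by
  constructor
  · refine ⟨fun i => Stmt3Aux.Vset n i, ?_, fun i => ⟨Stmt3Aux.Vset_alg n i, Stmt3Aux.Vset_irr n i⟩⟩
    intro a b hab
    exact Stmt3Aux.Vset_strict hab (Nat.le_of_lt_succ b.isLt)
  · rintro ⟨C, hC, hall⟩
    exact Stmt3Aux.no_chain C hC hall
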